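/- If (u,v) is an identity of T_k for binary words u,v, then for every i ∈ {1,...,k}, |u|_x ≡ |v|_x (mod i) and |u|_y ≡ |v|_y (mod i); consequently |u|_x ≡ |v|_x and |u|_y ≡ |v|_y modulo lcm(1,...,k). -/

import Mathlib

private lemma foldl_count_aux {k i : ℕ} (hi : 0 < i)
    (F : Fin k → Fin k) (hF : ∀ s : Fin k, (F s).val = (s.val + 1) % i)
    (t : Fin k → Bool → Fin k) (c : Bool)
    (ht : ∀ s, t s c = F s) (ht' : ∀ s a, a ≠ c → t s a = s) :
    ∀ (w : List Bool) (z : Fin k), z.val < i →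
      (w.foldl t z).val = (z.val + w.count c) % i := by
  intro w
  induction w with
  | nil =>
      intro z hz
      simp [Nat.mod_eq_of_lt hz]
  | cons a w ih =>
      intro z hz
      by_cases hac : a = c
      · subst hac
        rw [List.foldl_cons, ht, ih _ (by rw [hF]; exact Nat.mod_lt _ hi)]
        rw [hF]
        rw [Nat.mod_add_mod]
        rw [List.count_cons]
        simp [Nat.add_comm, Nat.add_assoc, Nat.add_left_comm]
      · rw [List.foldl_cons, ht' _ _ hac, ih _ hz]
        rw [List.count_cons]
        simp [hac]

private lemma modeq_lcm {S : Finset ℕ} {a b : ℕ}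
    (h : ∀ i ∈ S, Nat.ModEq i a b) : Nat.ModEq (S.lcm id) a b := by
  rw [Nat.modEq_iff_dvd]
  rw [← Int.dvd_natAbs, Int.natCast_dvd_natCast]
  apply Finset.lcm_dvd
  intro i hi
  rw [← Int.natCast_dvd_natCast, Int.dvd_natAbs, id]
  exact (Nat.modEq_iff_dvd).mp (h i hi)

/-- If binary words u, v form an identity of T_k, then their letter counts are
congruent modulo every i ∈ {1,...,k}, hence modulo lcm(1,...,k).
Letters: `true` is x, `false` is y. -/
theorem identity_imp_counts_congruent (k : ℕ) (u v : List Bool)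
    (h : ∀ f g : Fin k → Fin k, ∀ z : Fin k,
        u.foldl (fun s a => if a then f s else g s) z =
        v.foldl (fun s a => if a then f s else g s) z) :
    (∀ i ∈ Finset.Icc 1 k,
        Nat.ModEq i (u.count true) (v.count true) ∧
        Nat.ModEq i (u.count false) (v.count false)) ∧
    Nat.ModEq ((Finset.Icc 1 k).lcm id) (u.count true) (v.count true) ∧
    Nat.ModEq ((Finset.Icc 1 k).lcm id) (u.count false) (v.count false) := by
  have main : ∀ i ∈ Finset.Icc 1 k,
      Nat.ModEq i (u.count true) (v.count true) ∧
      Nat.ModEq i (u.count false) (v.count false) := by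
    intro i hi
    rw [Finset.mem_Icc] at hi
    obtain ⟨hi1, hik⟩ := hi
    have hipos : 0 < i := hi1
    have hk : 0 < k := lt_of_lt_of_le hipos hik
    set F : Fin k → Fin k := fun s => ⟨(s.val + 1) % i,
      lt_of_lt_of_le (Nat.mod_lt _ hipos) hik⟩ with hFdef
    have hF : ∀ s : Fin k, (F s).val = (s.val + 1) % i := fun s => rfl
    set z0 : Fin k := ⟨0, hk⟩ with hz0
    constructor
    · have := congrArg Fin.val (h F (fun s => s) z0)
      rw [foldl_count_aux hipos F hF _ true (fun s => rfl) (by intro s a ha; simp at ha; simp [ha]) u z0 hipos,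
        foldl_count_aux hipos F hF _ true (fun s => rfl) (by intro s a ha; simp at ha; simp [ha]) v z0 hipos] at this
      simpa [Nat.ModEq, hz0] using this
    · have := congrArg Fin.val (h (fun s => s) F z0)
      rw [foldl_count_aux hipos F hF _ false (fun s => rfl) (by intro s a ha; simp at ha; simp [ha]) u z0 hipos,
        foldl_count_aux hipos F hF _ false (fun s => rfl) (by intro s a ha; simp at ha; simp [ha]) v z0 hipos] at this
      simpa [Nat.ModEq, hz0] using this
  exact ⟨main, modeq_lcm (fun i hi => (main i hi).1), modeq_lcm (fun i hi => (main i hi).2)⟩
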